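/- arXiv:math/0607125 — 2 statements merged into one kernel-verified Lean document; each statement's English description precedes it below -/
import Mathlib

section
/- Let R be a PvMD and J = x₁R + ⋯ + xₙR a nonzero finitely generated ideal of R such that J_v ≠ R. If P is a t-prime ideal of R containing J, then the following are equivalent: (1) P is a minimal prime of J_v; (2) P is a minimal prime of J; (3) P is a minimal prime of x_iR for some i with 1 ≤ i ≤ n. -/
/-! Definitions following El Baghdadi–Gabelli, "Ring-theoretic properties of PvMDs".
`A` is an integral domain with quotient field `K`; all star-operation notions are
defined for an algebra `A → K` (instantiated with `K = FractionRing A`). -/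

namespace Paper

section NoField

variable (A : Type*) [CommRing A]

/-- Finite character: every nonzero nonunit lies in only finitely many maximal ideals. -/
def FiniteCharacter : Prop :=
  ∀ x : A, x ≠ 0 → ¬ IsUnit x → {M : Ideal A | M.IsMaximal ∧ x ∈ M}.Finite

/-- Ascending chain condition on radical ideals. -/
def ACCRadical : Prop :=
  ∀ f : ℕ →o Ideal A, (∀ n, (f n).IsRadical) → ∃ n, ∀ m, n ≤ m → f m = f n

/-- `P` is a branched prime: there is a `P`-primary ideal different from `P`. -/
def IsBranched (P : Ideal A) : Prop :=
  P.IsPrime ∧ P ≠ ⊥ ∧ ∃ Q : Ideal A, Q.IsPrimary ∧ Q.radical = P ∧ Q ≠ P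

/-- `P` is a height-one prime of the domain `A`. -/
def HeightOne (P : Ideal A) : Prop :=
  P.IsPrime ∧ P ≠ ⊥ ∧ ∀ Q : Ideal A, Q.IsPrime → Q < P → Q = ⊥

end NoField

section Generic

variable (A : Type*) (K : Type*) [CommRing A] [CommRing K] [Algebra A K]

/-- The image of an ideal `I` of `A` in `K`, as an `A`-submodule of `K`. -/
def sub (I : Ideal A) : Submodule A K := Submodule.map (Algebra.linearMap A K) I

/-- The dual `(A : E) = {x ∈ K : xE ⊆ A}` of an `A`-submodule `E` of `K`. -/
def dual (E : Submodule A K) : Submodule A K := 1 / E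

/-- The `v`-operation `E ↦ (A : (A : E))` on submodules of `K`. -/
def vop (E : Submodule A K) : Submodule A K := dual A K (dual A K E)

/-- The `v`-closure `I_v` of an ideal `I` of `A`, as an ideal of `A`. -/
def vcl (I : Ideal A) : Ideal A := (vop A K (sub A K I)).comap (Algebra.linearMap A K)

/-- The `t`-closure `I_t = ⋃ J_v`, `J` ranging over the nonzero finitely generated
subideals of `I`. -/
def tcl (I : Ideal A) : Ideal A :=
  ⨆ J : {J : Ideal A // J.FG ∧ J ≠ ⊥ ∧ J ≤ I}, vcl A K J.1

/-- A (nonzero) `t`-ideal. -/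
def IsTIdeal (I : Ideal A) : Prop := I ≠ ⊥ ∧ tcl A K I = I

/-- A prime `t`-ideal. -/
def IsTPrime (P : Ideal A) : Prop := P.IsPrime ∧ IsTIdeal A K P

/-- A `t`-maximal ideal: maximal among proper `t`-ideals. -/
def IsTMax (M : Ideal A) : Prop :=
  IsTIdeal A K M ∧ M ≠ ⊤ ∧ ∀ J : Ideal A, IsTIdeal A K J → J ≠ ⊤ → M ≤ J → J = M

/-- The localization `A_P ⊆ K` of `A` at (the complement of) a prime `P`, as a subset of `K`. -/
def locSet (P : Ideal A) : Set K :=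
  {x | ∃ a s : A, s ∉ P ∧ algebraMap A K s * x = algebraMap A K a}

/-- The trace ideal `I(A:I)`, as an ideal of `A`. -/
def traceIdeal (I : Ideal A) : Ideal A :=
  (sub A K I * dual A K (sub A K I)).comap (Algebra.linearMap A K)

/-- `I` is `t`-invertible: `(I(A:I))_t = A`. -/
def IsTInvertible (I : Ideal A) : Prop := tcl A K (traceIdeal A K I) = ⊤

/-- The `t`-radical trace property: for every nonzero ideal `I`, `(I(A:I))_t` is `A`
or a radical ideal. -/
def IsTRTP : Prop :=
  ∀ I : Ideal A, I ≠ ⊥ →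
    tcl A K (traceIdeal A K I) = ⊤ ∨ (tcl A K (traceIdeal A K I)).IsRadical

/-- The radical trace property: for every nonzero ideal `I`, `I(A:I)` is `A`
or a radical ideal. -/
def IsRTP : Prop :=
  ∀ I : Ideal A, I ≠ ⊥ → traceIdeal A K I = ⊤ ∨ (traceIdeal A K I).IsRadical

/-- The `t#`-property. -/
def IsTSharp : Prop :=
  ∀ M₁ M₂ : Set (Ideal A), M₁ ⊆ {M | IsTMax A K M} → M₂ ⊆ {M | IsTMax A K M} →
    M₁ ≠ M₂ → (⋂ M ∈ M₁, locSet A K M) ≠ (⋂ M ∈ M₂, locSet A K M)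

/-- The `t##`-property. -/
def IsTSharpSharp : Prop :=
  ∀ P₁ P₂ : Set (Ideal A), P₁ ⊆ {P | IsTPrime A K P} → P₂ ⊆ {P | IsTPrime A K P} →
    (∀ P ∈ P₁, ∀ Q ∈ P₁, P ≤ Q → P = Q) → (∀ P ∈ P₂, ∀ Q ∈ P₂, P ≤ Q → P = Q) →
    P₁ ≠ P₂ → (⋂ P ∈ P₁, locSet A K P) ≠ (⋂ P ∈ P₂, locSet A K P)

/-- The `#`-property. -/
def IsSharp : Prop :=
  ∀ M₁ M₂ : Set (Ideal A), M₁.Nonempty → M₂.Nonempty →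
    M₁ ⊆ {M | M.IsMaximal} → M₂ ⊆ {M | M.IsMaximal} →
    M₁ ≠ M₂ → (⋂ M ∈ M₁, locSet A K M) ≠ (⋂ M ∈ M₂, locSet A K M)

/-- Ascending chain condition on radical `t`-ideals. -/
def ACCRadicalT : Prop :=
  ∀ f : ℕ →o Ideal A, (∀ n, IsTIdeal A K (f n) ∧ (f n).IsRadical) →
    ∃ n, ∀ m, n ≤ m → f m = f n

/-- Ascending chain condition on prime `t`-ideals. -/
def ACCPrimeT : Prop :=
  ∀ f : ℕ →o Ideal A, (∀ n, IsTPrime A K (f n)) → ∃ n, ∀ m, n ≤ m → f m = f n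

/-- `t`-finite character: every nonzero nonunit lies in only finitely many
`t`-maximal ideals. -/
def TFiniteCharacter : Prop :=
  ∀ x : A, x ≠ 0 → ¬ IsUnit x → {M : Ideal A | IsTMax A K M ∧ x ∈ M}.Finite

/-- Weakly Matlis: `t`-finite character and every `t`-prime is contained in a unique
`t`-maximal ideal. -/
def IsWeaklyMatlis : Prop :=
  TFiniteCharacter A K ∧ ∀ P : Ideal A, IsTPrime A K P → ∃! M : Ideal A, IsTMax A K M ∧ P ≤ M

/-- h-local: finite character and every nonzero prime is contained in a unique
maximal ideal. -/
def IsHLocal : Prop :=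
  FiniteCharacter A ∧
    ∀ P : Ideal A, P.IsPrime → P ≠ ⊥ → ∃! M : Ideal A, M.IsMaximal ∧ P ≤ M

/-- Prüfer domain: every nonzero finitely generated ideal is invertible. -/
def IsPruferD : Prop :=
  ∀ I : Ideal A, I ≠ ⊥ → I.FG → sub A K I * dual A K (sub A K I) = 1

/-- Strongly discrete Prüfer domain: `P ≠ P²` for all nonzero primes. -/
def IsSDPrufer : Prop :=
  IsPruferD A K ∧ ∀ P : Ideal A, P.IsPrime → P ≠ ⊥ → P * P ≠ P

/-- Generalized Dedekind domain. -/
def IsGenDedekind : Prop := IsSDPrufer A K ∧ ACCRadical A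

/-- Divisorial domain: every nonzero ideal is divisorial. -/
def IsDivisorialDomain : Prop := ∀ I : Ideal A, I ≠ ⊥ → vcl A K I = I

/-- Stable domain: every nonzero ideal `J` satisfies `J((J:J):J) = (J:J)`. -/
def IsStableDomain : Prop :=
  ∀ J : Ideal A, J ≠ ⊥ →
    sub A K J * ((sub A K J / sub A K J) / sub A K J) = sub A K J / sub A K J

/-- The `w`-operation (as a semistar operation): `E_w = ⋂_{M ∈ t-Max(A)} E A_M`,
computed as a subset of `K`. -/
def wSet (E : Submodule A K) : Set K :=
  ⋂ M ∈ {M : Ideal A | IsTMax A K M}, {x : K | ∃ s : A, s ∉ M ∧ s • x ∈ E}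

/-- A (nonzero) `w`-ideal: `I = I_w`. -/
def IsWIdeal (I : Ideal A) : Prop := I ≠ ⊥ ∧ wSet A K (sub A K I) = (sub A K I : Set K)

/-- The endomorphism ring `E(I) = (I : I)`, as a submodule of `K`. -/
def eRing (I : Ideal A) : Submodule A K := sub A K I / sub A K I

/-- `I` is a `w`-stable ideal: `(I(E(I):I))_w = E(I)`. -/
def IsWStableIdeal (I : Ideal A) : Prop :=
  wSet A K (sub A K I * (eRing A K I / sub A K I)) = (eRing A K I : Set K)

/-- `A` is `w`-stable: every `w`-ideal is `w`-stable. -/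
def IsWStable : Prop := ∀ I : Ideal A, IsWIdeal A K I → IsWStableIdeal A K I

/-- `A` is `w`-divisorial: `I_w = I_v` for every nonzero ideal. -/
def IsWDivisorial : Prop :=
  ∀ I : Ideal A, I ≠ ⊥ → wSet A K (sub A K I) = ((vop A K (sub A K I) : Submodule A K) : Set K)

/-- The endomorphism ring `E(I) = (I : I)` as a subalgebra of `K`. -/
def eSubalgebra (I : Ideal A) : Subalgebra A K where
  carrier := {x : K | ∀ y ∈ sub A K I, x * y ∈ sub A K I}
  mul_mem' := by
    intro a b ha hb y hy
    rw [mul_assoc]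
    exact ha _ (hb _ hy)
  one_mem' := by
    intro y hy
    rw [one_mul]; exact hy
  add_mem' := by
    intro a b ha hb y hy
    rw [add_mul]
    exact Submodule.add_mem _ (ha _ hy) (hb _ hy)
  zero_mem' := by
    intro y hy
    rw [zero_mul]
    exact Submodule.zero_mem _
  algebraMap_mem' := by
    intro r y hy
    rw [← Algebra.smul_def]
    exact Submodule.smul_mem _ r hy

end Generic

section Domain

variable (R : Type*) [CommRing R] [IsDomain R]

/-- A Prüfer `v`-multiplication domain: the localization at every `t`-maximal ideal
is a valuation domain. -/
def IsPvMD : Prop :=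
  ∀ M : Ideal R, IsTMax R (FractionRing R) M →
    ∃ _ : M.IsPrime, ValuationRing (Localization.AtPrime M)

/-- A strongly discrete PvMD: `(P²)_t ≠ P` for every `t`-prime `P`. -/
def IsSDPvMD : Prop :=
  IsPvMD R ∧ ∀ P : Ideal R, IsTPrime R (FractionRing R) P →
    tcl R (FractionRing R) (P * P) ≠ P

/-- A generalized Krull domain: a strongly discrete PvMD with ACC on radical
`t`-ideals. -/
def IsGenKrull : Prop := IsSDPvMD R ∧ ACCRadicalT R (FractionRing R)

/-- An almost Krull domain: the localization at every `t`-maximal ideal is a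
rank-one discrete valuation ring. -/
def IsAlmostKrull : Prop :=
  ∀ M : Ideal R, IsTMax R (FractionRing R) M →
    ∃ _ : M.IsPrime, IsDiscreteValuationRing (Localization.AtPrime M)

/-- A Krull domain: `R = ⋂ R_P` over the height-one primes, each such localization
is a DVR, and every nonzero element lies in only finitely many height-one primes. -/
def IsKrull : Prop :=
  (((1 : Submodule R (FractionRing R)) : Set (FractionRing R)) =
      ⋂ P ∈ {P : Ideal R | HeightOne R P}, locSet R (FractionRing R) P) ∧
    (∀ P : Ideal R, HeightOne R P →
      ∃ _ : P.IsPrime, IsDiscreteValuationRing (Localization.AtPrime P)) ∧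
    ∀ x : R, x ≠ 0 → {P : Ideal R | HeightOne R P ∧ x ∈ P}.Finite

end Domain


section CommRingNagata

variable (R : Type*) [CommRing R]

/-- The multiplicative set `N_t = {f ∈ R[X] : (c(f))_t = R}` (it is multiplicatively
closed, so taking the closure does not change it). -/
noncomputable def NtMonoid : Submonoid (Polynomial R) :=
  Submonoid.closure
    {f : Polynomial R | tcl R (FractionRing R) (Ideal.span (Set.range f.coeff)) = ⊤}

/-- The `t`-Nagata ring `R⟨X⟩ = R[X]_{N_t}`. -/
def tNagata : Type _ := Localization (NtMonoid R)

noncomputable instance : CommRing (tNagata R) :=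
  inferInstanceAs (CommRing (Localization (NtMonoid R)))

/-- The `##`-property: every overring is a `#`-domain. -/
def IsSharpSharp : Prop :=
  ∀ T : Subalgebra R (FractionRing R), IsSharp ↥T (FractionRing R)


end CommRingNagata

end Paper


namespace Paper

variable (R : Type*) [CommRing R] [IsDomain R]

local notation "KK" => FractionRing R

private lemma mem_vcl_iff {I : Ideal R} {z : R} :
    z ∈ vcl R KK I ↔
      algebraMap R KK z ∈ (1 : Submodule R KK) / ((1 : Submodule R KK) / sub R KK I) := by
  simp only [vcl, vop, dual, Submodule.mem_comap, Algebra.linearMap_apply]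

private lemma le_vcl (I : Ideal R) : I ≤ vcl R KK I := by
  intro z hz
  rw [mem_vcl_iff, Submodule.mem_div_iff_forall_mul_mem]
  intro y hy
  rw [Submodule.mem_div_iff_forall_mul_mem] at hy
  rw [mul_comm]
  exact hy _ ⟨z, hz, rfl⟩

private lemma vcl_le_tcl {I J' : Ideal R} (hfg : J'.FG) (hne : J' ≠ ⊥) (hle : J' ≤ I) :
    vcl R KK J' ≤ tcl R KK I :=
  le_iSup (fun J'' : {J : Ideal R // J.FG ∧ J ≠ ⊥ ∧ J ≤ I} => vcl R KK J''.1) ⟨J', hfg, hne, hle⟩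

private lemma le_tcl (I : Ideal R) : I ≤ tcl R KK I := by
  intro z hz
  by_cases h0 : z = 0
  · simpa [h0] using (tcl R KK I).zero_mem
  · exact vcl_le_tcl R (Submodule.fg_span_singleton z)
      (fun hb => h0 (Ideal.span_singleton_eq_bot.mp hb))
      (Ideal.span_le.mpr (Set.singleton_subset_iff.mpr hz))
      (le_vcl R _ (Ideal.mem_span_singleton_self z))

private lemma exists_tMax {P : Ideal R} (hPb : P ≠ ⊥) (hPt : tcl R KK P = P) (hPtop : P ≠ ⊤) :
    ∃ M : Ideal R, IsTMax R KK M ∧ P ≤ M := by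
  have hZ : ∀ c ⊆ {I : Ideal R | tcl R KK I = I ∧ I ≠ ⊤}, IsChain (· ≤ ·) c →
      ∀ y ∈ c, ∃ ub ∈ {I : Ideal R | tcl R KK I = I ∧ I ≠ ⊤}, ∀ z ∈ c, z ≤ ub := by
    intro c hcS hchain y hyc
    refine ⟨sSup c, ⟨?_, ?_⟩, fun z hz => le_sSup hz⟩
    · refine le_antisymm ?_ (le_tcl R _)
      show (⨆ J : {J : Ideal R // J.FG ∧ J ≠ ⊥ ∧ J ≤ sSup c}, vcl R KK J.1) ≤ sSup c
      refine iSup_le fun J'' => ?_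
      obtain ⟨J', hfg, hne, hle⟩ := J''
      obtain ⟨I, hIc, hJI⟩ :=
        ((CompleteLattice.isCompactElement_iff_le_of_directed_sSup_le _ J').mp
          ((Submodule.fg_iff_compact J').mp hfg)) c ⟨y, hyc⟩ hchain.directedOn hle
      exact le_trans (le_trans (vcl_le_tcl R hfg hne hJI) (le_of_eq (hcS hIc).1)) (le_sSup hIc)
    · intro htop
      have h1 : (1 : R) ∈ sSup c := htop ▸ Submodule.mem_top
      obtain ⟨I, hIc, hI1⟩ := (Submodule.mem_sSup_of_directed ⟨y, hyc⟩ hchain.directedOn).mp h1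
      exact (hcS hIc).2 ((Ideal.eq_top_iff_one I).mpr hI1)
  obtain ⟨M, hPM, hMmem, hMmax⟩ :=
    zorn_le_nonempty₀ {I : Ideal R | tcl R KK I = I ∧ I ≠ ⊤} hZ P ⟨hPt, hPtop⟩
  refine ⟨M, ⟨⟨?_, hMmem.1⟩, hMmem.2, ?_⟩, hPM⟩
  · exact fun h => hPb (le_bot_iff.mp (h ▸ hPM))
  · intro J' hJ' hJtop hMJ
    exact le_antisymm (hMmax ⟨hJ'.2, hJtop⟩ hMJ) hMJ

private lemma exists_min_dvd {L : Type*} [CommRing L] [IsDomain L] [ValuationRing L]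
    {n : ℕ} (f : Fin n → L) (hn : n ≠ 0) : ∃ i, ∀ j, f i ∣ f j := by
  have key : ∀ T : Finset (Fin n), T = ∅ ∨ ∃ i ∈ T, ∀ j ∈ T, f i ∣ f j := by
    intro T
    induction T using Finset.induction_on with
    | empty => exact Or.inl rfl
    | @insert a T ha ih =>
      refine Or.inr ?_
      rcases ih with rfl | ⟨i, hiT, hi⟩
      · exact ⟨a, Finset.mem_insert_self a _, by
          intro j hj
          rcases Finset.mem_insert.mp hj with rfl | h
          · exact dvd_rfl
          · exact absurd h (Finset.notMem_empty j)⟩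
      · rcases ValuationRing.dvd_total (f a) (f i) with h | h
        · refine ⟨a, Finset.mem_insert_self a _, ?_⟩
          intro j hj
          rcases Finset.mem_insert.mp hj with rfl | hjT
          · exact dvd_rfl
          · exact h.trans (hi j hjT)
        · refine ⟨i, Finset.mem_insert_of_mem hiT, ?_⟩
          intro j hj
          rcases Finset.mem_insert.mp hj with rfl | hjT
          · exact h
          · exact hi j hjT
  rcases key Finset.univ with h | ⟨i, _, hi⟩
  · have : Nonempty (Fin n) := ⟨⟨0, Nat.pos_of_ne_zero hn⟩⟩
    exact absurd h (Finset.univ_nonempty.ne_empty)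
  · exact ⟨i, fun j => hi j (Finset.mem_univ j)⟩

private lemma key_lemma (hR : IsPvMD R) {n : ℕ} {x : Fin n → R} {J : Ideal R}
    (hJ : J = Ideal.span (Set.range x)) (hJ0 : J ≠ ⊥) {P : Ideal R}
    (hP : IsTPrime R KK P) :
    ∃ (M : Ideal R) (i : Fin n) (s : R), P ≤ M ∧ s ∉ M ∧
      (∀ j, s * x j ∈ Ideal.span {x i}) ∧ ∀ z ∈ vcl R KK J, s * z ∈ Ideal.span {x i} := by
  obtain ⟨M, hM, hPM⟩ := exists_tMax R hP.2.1 hP.2.2 hP.1.ne_top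
  obtain ⟨hMp, hval⟩ := hR M hM
  haveI := hMp
  haveI := hval
  have hinj : Function.Injective (algebraMap R (Localization.AtPrime M)) :=
    IsLocalization.injective _ M.primeCompl_le_nonZeroDivisors
  have hx0 : ∃ i, x i ≠ 0 := by
    by_contra h
    push_neg at h
    exact hJ0 (hJ.trans (Ideal.span_eq_bot.mpr (by rintro _ ⟨i, rfl⟩; exact h i)))
  have hn : n ≠ 0 := by rintro rfl; exact hx0.elim fun i _ => i.elim0
  obtain ⟨i₀, hi₀⟩ := exists_min_dvd (fun j => algebraMap R (Localization.AtPrime M) (x j)) hn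
  have hxi0 : x i₀ ≠ 0 := by
    obtain ⟨k, hk⟩ := hx0
    intro h
    apply hk
    apply hinj
    obtain ⟨c, hc⟩ := hi₀ k
    simp only [h, map_zero, zero_mul] at hc
    rw [hc, map_zero]
  have hstep : ∀ j, ∃ s : R, s ∉ M ∧ s * x j ∈ Ideal.span {x i₀} := by
    intro j
    obtain ⟨c, hc⟩ := hi₀ j
    obtain ⟨⟨r, t⟩, hrt⟩ := IsLocalization.surj M.primeCompl c
    refine ⟨t, t.2, ?_⟩
    rw [Ideal.mem_span_singleton]
    refine ⟨r, ?_⟩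
    apply hinj
    simp only [map_mul]
    rw [hc]
    simp only [map_mul] at hrt ⊢
    calc algebraMap R (Localization.AtPrime M) ↑t *
          (algebraMap R (Localization.AtPrime M) (x i₀) * c)
        = algebraMap R (Localization.AtPrime M) (x i₀) *
            (c * algebraMap R (Localization.AtPrime M) ↑t) := by ring
      _ = _ := by rw [hrt]
  choose σ hσM hσspan using hstep
  set s : R := ∏ j, σ j with hs_def
  have hsM : s ∉ M := by
    have : s ∈ M.primeCompl := Submonoid.prod_mem _ (fun j _ => hσM j)
    exact this
  have hs : ∀ j, s * x j ∈ Ideal.span {x i₀} := by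
    intro j
    have heq : s * x j = (∏ k ∈ Finset.univ.erase j, σ k) * (σ j * x j) := by
      rw [hs_def, ← Finset.mul_prod_erase Finset.univ σ (Finset.mem_univ j)]; ring
    rw [heq]
    exact Ideal.mul_mem_left _ _ (hσspan j)
  have hainj : Function.Injective (algebraMap R KK) := IsFractionRing.injective R KK
  have ha : algebraMap R KK (x i₀) ≠ 0 := fun h => hxi0 (hainj (by rw [h, map_zero]))
  refine ⟨M, i₀, s, hPM, hsM, hs, ?_⟩
  intro z hz
  have hzK := (mem_vcl_iff R).mp hz
  have hsJ : ∀ t ∈ J, s * t ∈ Ideal.span {x i₀} := by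
    intro t ht
    have hJle : J ≤ Submodule.comap (LinearMap.lsmul R R s) (Ideal.span {x i₀}) := by
      rw [hJ, Ideal.span_le]
      rintro _ ⟨j, rfl⟩
      simpa [smul_eq_mul] using hs j
    simpa [smul_eq_mul] using hJle ht
  have hw : algebraMap R KK s / algebraMap R KK (x i₀) ∈
      (1 : Submodule R KK) / sub R KK J := by
    rw [Submodule.mem_div_iff_forall_mul_mem]
    rintro y hy
    obtain ⟨t, ht, rfl⟩ := hy
    obtain ⟨r, hr⟩ := Ideal.mem_span_singleton'.mp (hsJ t ht)
    rw [Submodule.mem_one]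
    refine ⟨r, ?_⟩
    have hrK := congrArg (algebraMap R KK) hr
    simp only [map_mul] at hrK
    rw [Algebra.linearMap_apply, div_mul_eq_mul_div, eq_div_iff ha]
    linear_combination hrK
  have h1 := (Submodule.mem_div_iff_forall_mul_mem.mp hzK) _ hw
  rw [Submodule.mem_one] at h1
  obtain ⟨r', hr'⟩ := h1
  rw [Ideal.mem_span_singleton']
  refine ⟨r', ?_⟩
  apply hainj
  simp only [map_mul]
  have h2 : algebraMap R KK r' * algebraMap R KK (x i₀) =
      algebraMap R KK z * algebraMap R KK s := by
    rw [hr']; field_simp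
  linear_combination h2


theorem stmt_0 (hRK : ¬ IsField R) (hR : IsPvMD R)
    (n : ℕ) (x : Fin n → R) (J : Ideal R)
    (hJ : J = Ideal.span (Set.range x)) (hJ0 : J ≠ ⊥) (hJv : vcl R KK J ≠ ⊤)
    (P : Ideal R) (hP : IsTPrime R KK P) (hJP : J ≤ P) :
    (P ∈ (vcl R KK J).minimalPrimes ↔ P ∈ J.minimalPrimes) ∧
    (P ∈ J.minimalPrimes ↔ ∃ i : Fin n, P ∈ (Ideal.span {x i} : Ideal R).minimalPrimes) := by
  have hPprime : P.IsPrime := hP.1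
  obtain ⟨M, i₀, s, hPM, hsM, hdvd, hvdvd⟩ := key_lemma R hR hJ hJ0 hP
  have hJfg : J.FG := hJ ▸ Submodule.fg_span (Set.finite_range x)
  have hJv_le_P : vcl R KK J ≤ P := (vcl_le_tcl R hJfg hJ0 hJP).trans (le_of_eq hP.2.2)
  have hxJ : Ideal.span {x i₀} ≤ J := by
    rw [hJ]
    exact Ideal.span_le.mpr (Set.singleton_subset_iff.mpr (Ideal.subset_span ⟨i₀, rfl⟩))
  have factA : ∀ Q : Ideal R, Q.IsPrime → Q ≤ M → J ≤ Q → vcl R KK J ≤ Q := by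
    intro Q hQ hQM hJQ z hz
    have hsz : s * z ∈ Q := hJQ (hxJ (hvdvd z hz))
    exact (hQ.mem_or_mem hsz).resolve_left fun h => hsM (hQM h)
  have factB : ∀ Q : Ideal R, Q.IsPrime → Q ≤ M → x i₀ ∈ Q → J ≤ Q := by
    intro Q hQ hQM hx
    rw [hJ, Ideal.span_le]
    rintro _ ⟨j, rfl⟩
    have hsx : s * x j ∈ Q := Ideal.span_le.mpr (Set.singleton_subset_iff.mpr hx) (hdvd j)
    exact (hQ.mem_or_mem hsx).resolve_left fun h => hsM (hQM h)
  constructor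
  · constructor
    · rintro ⟨_, hmin⟩
      exact ⟨⟨hPprime, hJP⟩, fun Q hQ hQP =>
        hmin ⟨hQ.1, factA Q hQ.1 (le_trans hQP hPM) hQ.2⟩ hQP⟩
    · rintro ⟨_, hmin⟩
      exact ⟨⟨hPprime, hJv_le_P⟩, fun Q hQ hQP =>
        hmin ⟨hQ.1, le_trans (le_vcl R J) hQ.2⟩ hQP⟩
  · constructor
    · rintro ⟨_, hmin⟩
      exact ⟨i₀, ⟨hPprime, le_trans hxJ hJP⟩, fun Q hQ hQP =>
        hmin ⟨hQ.1, factB Q hQ.1 (le_trans hQP hPM)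
          (hQ.2 (Ideal.mem_span_singleton_self _))⟩ hQP⟩
    · rintro ⟨i, ⟨_, hmin⟩⟩
      exact ⟨⟨hPprime, hJP⟩, fun Q hQ hQP => hmin ⟨hQ.1, Ideal.span_le.mpr
        (Set.singleton_subset_iff.mpr (hQ.2 (hJ ▸ Ideal.subset_span ⟨i, rfl⟩)))⟩ hQP⟩

end Paper
end

section
/- Let R be a PvMD and I a proper t-ideal of R. If each minimal prime of I is the radical of a v-finite divisorial ideal (i.e., the radical of J_v for some nonzero finitely generated ideal J), then I has only finitely many minimal primes. -/
namespace Paper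

variable (R : Type*) [CommRing R] [IsDomain R]

local notation "KK" => FractionRing R


section MyAux

variable {A : Type*} [CommRing A] {F : Type*} [CommRing F] [Algebra A F]

lemma my_mem_vcl_iff {J : Ideal A} {x : A} :
    x ∈ vcl A F J ↔ algebraMap A F x ∈ vop A F (sub A F J) := by
  simp [vcl, Ideal.mem_comap]

lemma my_le_vcl (J : Ideal A) : J ≤ vcl A F J := by
  intro x hx
  rw [my_mem_vcl_iff]
  simp only [vop, dual]
  rw [Submodule.mem_div_iff_forall_mul_mem]
  intro y hy
  rw [Submodule.mem_div_iff_forall_mul_mem] at hy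
  have hmem : algebraMap A F x ∈ sub A F J := ⟨x, hx, rfl⟩
  simpa [mul_comm] using hy _ hmem

lemma my_vcl_le_tcl {J I : Ideal A} (hfg : J.FG) (hne : J ≠ ⊥) (hle : J ≤ I) :
    vcl A F J ≤ tcl A F I :=
  le_iSup (fun J' : {J' : Ideal A // J'.FG ∧ J' ≠ ⊥ ∧ J' ≤ I} => vcl A F J'.1)
    ⟨J, hfg, hne, hle⟩

lemma my_mul_mem_vcl {J : Ideal A} {x : A} (hx : x ∈ vcl A F J) (s : A) :
    s * x ∈ vcl A F (Ideal.span {s} * J) := by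
  rw [my_mem_vcl_iff] at hx ⊢
  simp only [vop, dual] at hx ⊢
  rw [Submodule.mem_div_iff_forall_mul_mem] at hx ⊢
  intro z hz
  have hz' : algebraMap A F s * z ∈ (1 : Submodule A F) / sub A F J := by
    rw [Submodule.mem_div_iff_forall_mul_mem]
    rintro _ ⟨j, hj, rfl⟩
    rw [Submodule.mem_div_iff_forall_mul_mem] at hz
    have hmem : Algebra.linearMap A F (s * j) ∈ sub A F (Ideal.span {s} * J) :=
      ⟨s * j, Ideal.mul_mem_mul (Ideal.mem_span_singleton_self s) hj, rfl⟩
    have h2 := hz _ hmem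
    simpa [mul_comm, mul_assoc, mul_left_comm] using h2
  have h3 := hx _ hz'
  simpa [mul_comm, mul_assoc, mul_left_comm] using h3

lemma my_vop_mul_vop_le (E G : Submodule A F) :
    vop A F E * vop A F G ≤ vop A F (E * G) := by
  rw [Submodule.mul_le]
  intro y hy y' hy'
  simp only [vop, dual] at hy hy' ⊢
  rw [Submodule.mem_div_iff_forall_mul_mem] at hy hy' ⊢
  intro z hz
  have h1 : z * y' ∈ (1 : Submodule A F) / E := by
    rw [Submodule.mem_div_iff_forall_mul_mem]
    intro e he
    have h2 : z * e ∈ (1 : Submodule A F) / G := by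
      rw [Submodule.mem_div_iff_forall_mul_mem]
      intro g hg
      rw [Submodule.mem_div_iff_forall_mul_mem] at hz
      have := hz _ (Submodule.mul_mem_mul he hg)
      simpa [mul_comm, mul_assoc, mul_left_comm] using this
    have := hy' _ h2
    simpa [mul_comm, mul_assoc, mul_left_comm] using this
  have := hy _ h1
  simpa [mul_comm, mul_assoc, mul_left_comm] using this

lemma my_vop_pow_le (E : Submodule A F) (n : ℕ) :
    (vop A F E) ^ (n + 1) ≤ vop A F (E ^ (n + 1)) := by
  induction n with
  | zero => simp
  | succ n ih =>
    calc (vop A F E) ^ (n + 2) = (vop A F E) ^ (n + 1) * vop A F E := pow_succ _ _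
      _ ≤ vop A F (E ^ (n + 1)) * vop A F E := mul_le_mul' ih le_rfl
      _ ≤ vop A F (E ^ (n + 1) * E) := my_vop_mul_vop_le _ _
      _ = vop A F (E ^ (n + 2)) := by rw [← pow_succ]

lemma my_sub_mul (I J : Ideal A) : sub A F (I * J) = sub A F I * sub A F J := by
  apply le_antisymm
  · rintro _ ⟨x, hx, rfl⟩
    refine Submodule.mul_induction_on hx (fun a ha b hb => ?_) (fun a b ha hb => ?_)
    · have heq : Algebra.linearMap A F (a * b) =
          Algebra.linearMap A F a * Algebra.linearMap A F b := by
        simp [Algebra.linearMap_apply]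
      rw [heq]
      exact Submodule.mul_mem_mul ⟨a, ha, rfl⟩ ⟨b, hb, rfl⟩
    · rw [map_add]; exact Submodule.add_mem _ ha hb
  · rw [Submodule.mul_le]
    rintro _ ⟨a, ha, rfl⟩ _ ⟨b, hb, rfl⟩
    exact ⟨a * b, Ideal.mul_mem_mul ha hb, by simp [Algebra.linearMap_apply]⟩

lemma my_sub_pow (J : Ideal A) (n : ℕ) : sub A F (J ^ (n + 1)) = (sub A F J) ^ (n + 1) := by
  induction n with
  | zero => simp
  | succ n ih => rw [pow_succ, my_sub_mul, ih, ← pow_succ]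

lemma my_sub_vcl_le (J : Ideal A) : sub A F (vcl A F J) ≤ vop A F (sub A F J) := by
  rintro _ ⟨x, hx, rfl⟩
  exact my_mem_vcl_iff.1 hx

lemma my_dual_anti {E G : Submodule A F} (h : E ≤ G) : dual A F G ≤ dual A F E := by
  intro x hx
  rw [dual, Submodule.mem_div_iff_forall_mul_mem] at hx ⊢
  exact fun y hy => hx y (h hy)

lemma my_vop_mono {E G : Submodule A F} (h : E ≤ G) : vop A F E ≤ vop A F G :=
  my_dual_anti (my_dual_anti h)

lemma my_pow_mono {E G : Submodule A F} (h : E ≤ G) (n : ℕ) : E ^ n ≤ G ^ n := by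
  induction n with
  | zero => simp
  | succ n ih => rw [pow_succ, pow_succ]; exact mul_le_mul' ih h

lemma my_vcl_pow_le (J : Ideal A) (n : ℕ) :
    (vcl A F J) ^ (n + 1) ≤ vcl A F (J ^ (n + 1)) := by
  intro x hx
  rw [my_mem_vcl_iff]
  have h1 : algebraMap A F x ∈ sub A F ((vcl A F J) ^ (n + 1)) := ⟨x, hx, rfl⟩
  rw [my_sub_pow] at h1
  have h2 : (sub A F (vcl A F J)) ^ (n + 1) ≤ vop A F (sub A F (J ^ (n + 1))) := by
    calc (sub A F (vcl A F J)) ^ (n + 1) ≤ (vop A F (sub A F J)) ^ (n + 1) :=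
          my_pow_mono (my_sub_vcl_le J) _
      _ ≤ vop A F ((sub A F J) ^ (n + 1)) := my_vop_pow_le _ _
      _ = vop A F (sub A F (J ^ (n + 1))) := by rw [my_sub_pow]
  exact h2 h1

end MyAux

section MyAux2

variable {A : Type*} [CommRing A] [IsDomain A] {F : Type*} [CommRing F] [Algebra A F]

lemma my_pow_ne_bot {J : Ideal A} (h : J ≠ ⊥) (n : ℕ) : J ^ n ≠ ⊥ := by
  induction n with
  | zero => simp [Ideal.one_eq_top]
  | succ n ih =>
    rw [pow_succ, Ne, Ideal.mul_eq_bot]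
    rintro (h1 | h2)
    exacts [ih h1, h h2]

/-- Minimal primes over a `t`-ideal are `t`-closed on finitely generated subideals. -/
lemma my_vcl_le_of_minimal {I Q : Ideal A} (hI : IsTIdeal A F I) (hQ : Q ∈ I.minimalPrimes)
    {J : Ideal A} (hfg : J.FG) (hne : J ≠ ⊥) (hle : J ≤ Q) : vcl A F J ≤ Q := by
  classical
  have hQp : Q.IsPrime := hQ.1.1
  have hIQ : I ≤ Q := hQ.1.2
  -- the saturation of `I` with respect to the complement of `Q`
  set I' : Ideal A := ⨆ s : {s : A // s ∉ Q}, I.colon (Ideal.span {s.1}) with hI'def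
  have hdir : Directed (· ≤ ·) fun s : {s : A // s ∉ Q} => I.colon (Ideal.span {s.1}) := by
    rintro ⟨s, hs⟩ ⟨t, ht⟩
    refine ⟨⟨s * t, fun hst => ?_⟩, fun x hx => ?_, fun x hx => ?_⟩
    · rcases hQp.mem_or_mem hst with h | h
      exacts [hs h, ht h]
    · rw [Ideal.mem_colon_span_singleton] at hx ⊢
      have : x * (s * t) = x * s * t := by ring
      rw [this]; exact I.mul_mem_right _ hx
    · rw [Ideal.mem_colon_span_singleton] at hx ⊢
      have : x * (s * t) = x * t * s := by ring
      rw [this]; exact I.mul_mem_right _ hx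
  haveI : Nonempty {s : A // s ∉ Q} := ⟨⟨1, Ideal.ne_top_iff_one Q |>.1 hQp.ne_top⟩⟩
  have hmemI' : ∀ x : A, x ∈ I' ↔ ∃ s, s ∉ Q ∧ s * x ∈ I := by
    intro x
    rw [hI'def, Submodule.mem_iSup_of_directed _ hdir]
    constructor
    · rintro ⟨⟨s, hs⟩, hx⟩
      rw [Ideal.mem_colon_span_singleton] at hx
      exact ⟨s, hs, by rwa [mul_comm]⟩
    · rintro ⟨s, hs, hsx⟩
      exact ⟨⟨s, hs⟩, by rwa [Ideal.mem_colon_span_singleton, mul_comm]⟩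
  -- `Q` is contained in the radical of `I'`
  have hQrad : Q ≤ I'.radical := by
    intro x hx
    by_cases hd : Disjoint (I : Set A) (Q.primeCompl ⊔ Submonoid.powers x : Submonoid A)
    · obtain ⟨p, hp, hIp, hpd⟩ := Ideal.exists_le_prime_disjoint I _ hd
      have hpQ : p ≤ Q := by
        intro a ha
        by_contra haQ
        exact Set.disjoint_left.1 hpd ha
          (SetLike.le_def.1 le_sup_left (show a ∈ Q.primeCompl from haQ))
      have hQle : Q ≤ p := hQ.2 ⟨hp, hIp⟩ hpQ
      exact absurd (SetLike.le_def.1 le_sup_right (Submonoid.mem_powers x))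
        (fun hxS => Set.disjoint_left.1 hpd (hQle hx) hxS)
    · rw [Set.not_disjoint_iff] at hd
      obtain ⟨y, hyI, hyS⟩ := hd
      rw [SetLike.mem_coe, Submonoid.mem_sup] at hyS
      obtain ⟨s, hs, z, hz, rfl⟩ := hyS
      obtain ⟨n, rfl⟩ := hz
      exact ⟨n, (hmemI' _).2 ⟨s, hs, hyI⟩⟩
  -- get a power of J inside I'
  obtain ⟨n, hn⟩ := Ideal.exists_pow_le_of_le_radical_of_fg (hle.trans hQrad) hfg
  have hn1 : J ^ (n + 1) ≤ I' := le_trans (by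
    calc J ^ (n + 1) = J ^ n * J := pow_succ _ _
      _ ≤ J ^ n * ⊤ := Ideal.mul_mono_right le_top
      _ = J ^ n := by rw [Ideal.mul_top]) hn
  -- find a single denominator
  obtain ⟨T, hT⟩ := (Submodule.FG.pow hfg (n + 1) : (J ^ (n + 1)).FG)
  have hchoice : ∀ y ∈ T, ∃ s, s ∉ Q ∧ s * y ∈ I := by
    intro y hy
    have : y ∈ I' := hn1 (hT ▸ Ideal.subset_span hy)
    exact (hmemI' y).1 this
  choose! f hf1 hf2 using hchoice
  set s : A := ∏ y ∈ T, f y with hs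
  have hsQ : s ∉ Q := by
    intro hsm
    haveI := hQp
    obtain ⟨y, hy, hfy⟩ := Ideal.IsPrime.prod_mem_iff.1 hsm
    exact hf1 y hy hfy
  have hcolon : J ^ (n + 1) ≤ I.colon (Ideal.span {s}) := by
    rw [← hT, Submodule.span_le]
    intro y hy
    rw [SetLike.mem_coe, Ideal.mem_colon_span_singleton]
    have heq : y * s = f y * y * ∏ x ∈ T.erase y, f x := by
      rw [hs, ← Finset.mul_prod_erase T f hy]; ring
    rw [heq]
    exact I.mul_mem_right _ (hf2 y hy)
  -- conclude
  have hmul : Ideal.span {s} * J ^ (n + 1) ≤ I := by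
    rw [Ideal.mul_le]
    intro a ha b hb
    rw [Ideal.mem_span_singleton'] at ha
    obtain ⟨r, rfl⟩ := ha
    have : b * s ∈ I := Ideal.mem_colon_span_singleton.1 (hcolon hb)
    have heq : r * s * b = r * (b * s) := by ring
    rw [heq]
    exact I.mul_mem_left _ this
  have hvclpow : vcl A F (J ^ (n + 1)) ≤ Q := by
    intro x hx
    have h1 : s * x ∈ vcl A F (Ideal.span {s} * J ^ (n + 1)) := my_mul_mem_vcl hx s
    have hne2 : Ideal.span {s} * J ^ (n + 1) ≠ ⊥ := by
      rw [Ne, Ideal.mul_eq_bot]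
      rintro (h1' | h2')
      · exact hsQ (Ideal.span_singleton_eq_bot.1 h1' ▸ Q.zero_mem)
      · exact my_pow_ne_bot hne (n + 1) h2'
    have h2 : vcl A F (Ideal.span {s} * J ^ (n + 1)) ≤ I :=
      hI.2 ▸ my_vcl_le_tcl (Submodule.FG.mul (Submodule.fg_span_singleton s) (Submodule.FG.pow hfg (n + 1))) hne2 hmul
    have h3 : s * x ∈ Q := hIQ (h2 h1)
    rcases hQp.mem_or_mem h3 with h | h
    exacts [absurd h hsQ, h]
  have := (my_vcl_pow_le (F := F) J n).trans hvclpow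
  exact hQp.le_of_pow_le this

end MyAux2

section MyAux3

variable {A : Type*} [CommRing A]

lemma my_finite_minimalPrimes (I : Ideal A)
    (h : ∀ P ∈ I.minimalPrimes, ∃ J : Ideal A, J.FG ∧ J ≤ P ∧
      ∀ Q ∈ I.minimalPrimes, J ≤ Q → Q = P) :
    I.minimalPrimes.Finite := by
  by_contra hinf
  haveI : Infinite ↥(I.minimalPrimes) := Set.infinite_coe_iff.2 hinf
  set U : Ultrafilter ↥(I.minimalPrimes) := Ultrafilter.of Filter.cofinite with hU
  have hprime : ∀ p : ↥(I.minimalPrimes), (p : Ideal A).IsPrime := fun p => p.2.1.1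
  have hIle : ∀ p : ↥(I.minimalPrimes), I ≤ (p : Ideal A) := fun p => p.2.1.2
  set q : Ideal A :=
    { carrier := {x | {p : ↥(I.minimalPrimes) | x ∈ (p : Ideal A)} ∈ U}
      add_mem' := fun {a b} ha hb => Filter.mem_of_superset (Filter.inter_mem ha hb)
        (fun p hp => Ideal.add_mem _ hp.1 hp.2)
      zero_mem' := Filter.univ_mem' fun p => Ideal.zero_mem _
      smul_mem' := fun c {x} hx => Filter.mem_of_superset hx
        (fun p hp => by simpa using Ideal.mul_mem_left _ c hp) } with hq
  have hq1 : (1 : A) ∉ q := by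
    intro h1
    have he : {p : ↥(I.minimalPrimes) | (1:A) ∈ (p : Ideal A)} = ∅ := by
      ext p
      simp [(Ideal.ne_top_iff_one _).1 (hprime p).ne_top]
    rw [hq] at h1
    have h1' : {p : ↥(I.minimalPrimes) | (1:A) ∈ (p : Ideal A)} ∈ U := h1
    rw [he] at h1'
    exact Filter.empty_notMem _ h1'
  haveI hqp : q.IsPrime := by
    constructor
    · rw [Ideal.ne_top_iff_one]; exact hq1
    · intro x y hxy
      have hsub : {p : ↥(I.minimalPrimes) | x * y ∈ (p : Ideal A)} ⊆
          {p | x ∈ (p : Ideal A)} ∪ {p | y ∈ (p : Ideal A)} :=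
        fun p hp => (hprime p).mem_or_mem hp
      have hmem : ({p : ↥(I.minimalPrimes) | x ∈ (p : Ideal A)} ∪
          {p | y ∈ (p : Ideal A)}) ∈ U := Filter.mem_of_superset hxy hsub
      exact Ultrafilter.union_mem_iff.1 hmem
  have hIq : I ≤ q := fun x hx => Filter.univ_mem' fun p => hIle p hx
  obtain ⟨P₀, hP₀, hP₀q⟩ := Ideal.exists_minimalPrimes_le hIq
  obtain ⟨J, hJfg, hJle, huniq⟩ := h P₀ hP₀
  obtain ⟨T, hT⟩ := hJfg
  have hsing : {p : ↥(I.minimalPrimes) | J ≤ (p : Ideal A)} ∈ U := by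
    have hTq : ∀ x ∈ T, {p : ↥(I.minimalPrimes) | x ∈ (p : Ideal A)} ∈ U := by
      intro x hx
      have : x ∈ q := hP₀q (hJle (hT ▸ Ideal.subset_span hx))
      exact this
    have hmem := Filter.biInter_finset_mem (s := fun x : A =>
      {p : ↥(I.minimalPrimes) | x ∈ (p : Ideal A)}) T |>.2 hTq
    refine Filter.mem_of_superset hmem ?_
    intro p hp
    simp only [Set.mem_iInter] at hp
    show J ≤ (p : Ideal A)
    rw [← hT, Ideal.span_le]
    exact fun x hx => hp x hx
  have hsub2 : {p : ↥(I.minimalPrimes) | J ≤ (p : Ideal A)} ⊆ {⟨P₀, hP₀⟩} :=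
    fun p hp => Subtype.ext (huniq _ p.2 hp)
  have h1 : ({⟨P₀, hP₀⟩} : Set ↥(I.minimalPrimes)) ∈ U := Filter.mem_of_superset hsing hsub2
  have h2 : ({⟨P₀, hP₀⟩} : Set ↥(I.minimalPrimes))ᶜ ∈ U :=
    Ultrafilter.of_le Filter.cofinite (by
      rw [Filter.mem_cofinite, compl_compl]
      exact Set.finite_singleton _)
  have h3 := Filter.inter_mem h1 h2
  rw [Set.inter_compl_self] at h3
  exact Filter.empty_notMem _ h3

end MyAux3

theorem stmt_2 (hRK : ¬ IsField R) (hR : IsPvMD R)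
    (I : Ideal R) (hI : IsTIdeal R KK I) (hIproper : I ≠ ⊤)
    (h : ∀ P ∈ I.minimalPrimes,
      ∃ J : Ideal R, J ≠ ⊥ ∧ J.FG ∧ P = (vcl R KK J).radical) :
    I.minimalPrimes.Finite := by
  apply my_finite_minimalPrimes
  intro P hP
  obtain ⟨J, hJne, hJfg, hPrad⟩ := h P hP
  refine ⟨J, hJfg, ?_, ?_⟩
  · calc J ≤ vcl R KK J := my_le_vcl J
      _ ≤ (vcl R KK J).radical := Ideal.le_radical
      _ = P := hPrad.symm
  · intro Q hQ hJQ
    have h1 : vcl R KK J ≤ Q := my_vcl_le_of_minimal hI hQ hJfg hJne hJQ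
    have h2 : (vcl R KK J).radical ≤ Q := hQ.1.1.radical_le_iff.2 h1
    rw [← hPrad] at h2
    exact le_antisymm (hQ.2 hP.1 h2) h2

end Paper
end
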